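/- Let a > 0 and set f₁ = (a/2, a/2, 0), f₂ = (0, a/2, a/2), f₃ = (a/2, 0, a/2) in Euclidean three-space. For every point x of three-space there exist integers m, n, p such that dist x (m·f₁ + n·f₂ + p·f₃) ≤ a / 2. -/

import Mathlib

private lemma fcc_aux (e0 e1 e2 : ℝ) (h0 : |e0| ≤ 1/2) (h1 : |e1| ≤ |e0|) (h2 : |e2| ≤ |e0|) :
    ∃ s : ℤ, Odd s ∧ (e0 - s)^2 + e1^2 + e2^2 ≤ 1 := by
  have h1' : e1^2 ≤ e0^2 := by rw [← sq_abs e0, ← sq_abs e1]; nlinarith [abs_nonneg e1]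
  have h2' : e2^2 ≤ e0^2 := by rw [← sq_abs e0, ← sq_abs e2]; nlinarith [abs_nonneg e2]
  rcases le_total 0 e0 with h | h
  · refine ⟨1, odd_one, ?_⟩
    have : e0 ≤ 1/2 := by rwa [abs_of_nonneg h] at h0
    push_cast
    nlinarith
  · refine ⟨-1, ⟨-1, by ring⟩, ?_⟩
    have : -e0 ≤ 1/2 := by rwa [abs_of_nonpos h] at h0
    push_cast
    nlinarith

private lemma fcc_key (y0 y1 y2 : ℝ) :
    ∃ u v w : ℤ, Even (u + v + w) ∧ (y0 - u)^2 + (y1 - v)^2 + (y2 - w)^2 ≤ 1 := by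
  set k0 := round y0
  set k1 := round y1
  set k2 := round y2
  have b0 := abs_sub_round y0
  have b1 := abs_sub_round y1
  have b2 := abs_sub_round y2
  rcases Int.even_or_odd (k0 + k1 + k2) with he | ho
  · refine ⟨k0, k1, k2, he, ?_⟩
    have a0 := abs_le.mp b0
    have a1 := abs_le.mp b1
    have a2 := abs_le.mp b2
    nlinarith [a0.1, a0.2, a1.1, a1.2, a2.1, a2.2]
  · -- flip the coordinate with largest deviation
    rcases le_total |y0 - k0| |y1 - k1| with m01 | m01
    · rcases le_total |y1 - k1| |y2 - k2| with m12 | m12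
      · obtain ⟨s, hs, hle⟩ := fcc_aux (y2 - k2) (y0 - k0) (y1 - k1) b2
          (m01.trans m12) m12
        refine ⟨k0, k1, k2 + s, ?_, ?_⟩
        · have : k0 + k1 + (k2 + s) = (k0 + k1 + k2) + s := by ring
          rw [this]; exact ho.add_odd hs
        · push_cast
          calc (y0 - k0)^2 + (y1 - k1)^2 + (y2 - (k2 + s))^2
              = (y2 - k2 - s)^2 + (y0 - k0)^2 + (y1 - k1)^2 := by ring
            _ ≤ 1 := hle
      · obtain ⟨s, hs, hle⟩ := fcc_aux (y1 - k1) (y0 - k0) (y2 - k2) b1 m01 m12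
        refine ⟨k0, k1 + s, k2, ?_, ?_⟩
        · have : k0 + (k1 + s) + k2 = (k0 + k1 + k2) + s := by ring
          rw [this]; exact ho.add_odd hs
        · push_cast
          calc (y0 - k0)^2 + (y1 - (k1 + s))^2 + (y2 - k2)^2
              = (y1 - k1 - s)^2 + (y0 - k0)^2 + (y2 - k2)^2 := by ring
            _ ≤ 1 := hle
    · rcases le_total |y0 - k0| |y2 - k2| with m02 | m02
      · obtain ⟨s, hs, hle⟩ := fcc_aux (y2 - k2) (y0 - k0) (y1 - k1) b2
          m02 (m01.trans m02)
        refine ⟨k0, k1, k2 + s, ?_, ?_⟩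
        · have : k0 + k1 + (k2 + s) = (k0 + k1 + k2) + s := by ring
          rw [this]; exact ho.add_odd hs
        · push_cast
          calc (y0 - k0)^2 + (y1 - k1)^2 + (y2 - (k2 + s))^2
              = (y2 - k2 - s)^2 + (y0 - k0)^2 + (y1 - k1)^2 := by ring
            _ ≤ 1 := hle
      · obtain ⟨s, hs, hle⟩ := fcc_aux (y0 - k0) (y1 - k1) (y2 - k2) b0 m01 m02
        refine ⟨k0 + s, k1, k2, ?_, ?_⟩
        · have : (k0 + s) + k1 + k2 = (k0 + k1 + k2) + s := by ring
          rw [this]; exact ho.add_odd hs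
        · push_cast
          calc (y0 - (k0 + s))^2 + (y1 - k1)^2 + (y2 - k2)^2
              = (y0 - k0 - s)^2 + (y1 - k1)^2 + (y2 - k2)^2 := by ring
            _ ≤ 1 := hle

/-- The covering radius of the face-centered cubic (FCC) lattice with cubic
parameter `a` is at most `a/2`: every point of Euclidean three-space is within
`a/2` of some lattice point `m·f₁ + n·f₂ + p·f₃`, where `f₁ = (a/2, a/2, 0)`,
`f₂ = (0, a/2, a/2)`, `f₃ = (a/2, 0, a/2)`. -/
theorem fcc_lattice_covers (a : ℝ) (ha : 0 < a)
    (x : EuclideanSpace ℝ (Fin 3)) :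
    ∃ m n p : ℤ,
      dist x (m • (!₂[a / 2, a / 2, 0] : EuclideanSpace ℝ (Fin 3)) +
              n • (!₂[0, a / 2, a / 2] : EuclideanSpace ℝ (Fin 3)) +
              p • (!₂[a / 2, 0, a / 2] : EuclideanSpace ℝ (Fin 3))) ≤ a / 2 := by
  have hc : (0:ℝ) < a / 2 := by linarith
  have hcne : (a/2 : ℝ) ≠ 0 := ne_of_gt hc
  obtain ⟨u, v, w, heven, hle⟩ := fcc_key (x 0 / (a/2)) (x 1 / (a/2)) (x 2 / (a/2))
  obtain ⟨t, ht⟩ := heven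
  refine ⟨u + v - t, t - u, t - v, ?_⟩
  set m : ℤ := u + v - t with hm
  set n : ℤ := t - u with hn
  set p : ℤ := t - v with hp
  have hmp : m + p = u := by rw [hm, hp]; omega
  have hmn : m + n = v := by rw [hm, hn]; omega
  have hnp : n + p = w := by rw [hn, hp]; omega
  have hL : ∀ i : Fin 3,
      (m • (!₂[a / 2, a / 2, 0] : EuclideanSpace ℝ (Fin 3)) +
       n • (!₂[0, a / 2, a / 2] : EuclideanSpace ℝ (Fin 3)) +
       p • (!₂[a / 2, 0, a / 2] : EuclideanSpace ℝ (Fin 3))) i =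
      (![(u:ℝ), v, w] i) * (a/2) := by
    intro i
    fin_cases i <;>
      simp [PiLp.add_apply, PiLp.smul_apply, zsmul_eq_mul] <;>
      push_cast [← hmp, ← hmn, ← hnp] <;> ring
  have hterm : ∀ (z k : ℝ), z - k * (a/2) = (z/(a/2) - k) * (a/2) := by
    intro z k; field_simp
  rw [EuclideanSpace.dist_eq]
  have hsum : ∑ i : Fin 3, dist (x i) ((m • (!₂[a / 2, a / 2, 0] : EuclideanSpace ℝ (Fin 3)) +
       n • (!₂[0, a / 2, a / 2] : EuclideanSpace ℝ (Fin 3)) +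
       p • (!₂[a / 2, 0, a / 2] : EuclideanSpace ℝ (Fin 3))) i) ^ 2 ≤ (a/2)^2 := by
    simp only [Real.dist_eq, sq_abs, Fin.sum_univ_three, hL 0, hL 1, hL 2]
    simp only [Matrix.cons_val_zero, Matrix.cons_val_one, Matrix.head_cons,
      Matrix.cons_val_two, Matrix.tail_cons]
    rw [hterm (x 0), hterm (x 1), hterm (x 2)]
    nlinarith [hle, sq_nonneg (a/2),
      mul_le_mul_of_nonneg_right hle (sq_nonneg (a/2))]
  calc Real.sqrt _ ≤ Real.sqrt ((a/2)^2) := Real.sqrt_le_sqrt hsum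
    _ = a/2 := Real.sqrt_sq hc.le
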